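/- Let K be a field such that K[√-1] is not algebraically closed. Then no finite field extension of K is algebraically closed. -/

import Mathlib

open Polynomial IntermediateField Module

universe u

lemma aux_pow_dvd_finrank {F M : Type*} [Field F] [Field M] [Algebra F M]
    [FiniteDimensional F M] {p : ℕ} (hp : p.Prime) [CharP F p]
    {a : F} (ha : ∀ b : F, b ^ p ≠ a) {n : ℕ} {x : M}
    (hx : x ^ p ^ n = algebraMap F M a) : p ^ n ∣ finrank F F⟮x⟯ := by
  by_contra h
  have hint : IsIntegral F x := IsIntegral.of_finite F x
  set E := F⟮x⟯ with hE
  set d := finrank F E with hd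
  have hd0 : d ≠ 0 := finrank_pos.ne'
  set g : E := AdjoinSimple.gen F x with hg
  have hgenpow : g ^ p ^ n = algebraMap F E a := by
    apply (algebraMap E M).injective
    rw [map_pow, AdjoinSimple.algebraMap_gen, hx, ← IsScalarTower.algebraMap_apply]
  set N : F := Algebra.norm F g with hN
  have key : N ^ p ^ n = a ^ d := by
    rw [hN, ← map_pow, hgenpow, Algebra.norm_algebraMap]
  set k := d.factorization p with hk
  set u := d / p ^ k with hu
  have hku : p ^ k * u = d := Nat.ordProj_mul_ordCompl_eq_self d p
  have hpu : ¬ p ∣ u := Nat.not_dvd_ordCompl hp hd0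
  have hkn : k < n := by
    by_contra hkn
    exact h ((Nat.pow_dvd_pow p (by omega)).trans (Nat.ordProj_dvd d p))
  have key2 : (a ^ u) ^ p ^ k = (N ^ p ^ (n - k)) ^ p ^ k := by
    rw [← pow_mul, ← pow_mul, ← pow_add, Nat.sub_add_cancel hkn.le, key, mul_comm u, hku]
  haveI : ExpChar F p := ExpChar.prime hp
  have hinj : Function.Injective (fun z : F => z ^ p ^ k) := by
    have h2 := Function.Injective.iterate (frobenius_inj F p) k
    intro z w hzw
    apply h2
    rw [iterate_frobenius, iterate_frobenius]
    exact hzw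
  have key3 : a ^ u = N ^ p ^ (n - k) := hinj key2
  have key4 : a ^ u = (N ^ p ^ (n - k - 1)) ^ p := by
    rw [key3, ← pow_mul, ← pow_succ]
    congr 2
    omega
  have hcop : u.Coprime p := (Nat.coprime_comm.mp (hp.coprime_iff_not_dvd.mpr hpu))
  obtain ⟨b, hb⟩ := (pow_mem_range_pow_of_coprime hcop a).mp ⟨_, key4.symm⟩
  exact ha b hb

lemma aux_perfectField (F M : Type*) [Field F] [Field M] [Algebra F M]
    [FiniteDimensional F M] [IsAlgClosed M] : PerfectField F := by
  obtain hp | hp := CharP.char_is_prime_or_zero F (ringChar F)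
  · haveI : Fact (Nat.Prime (ringChar F)) := ⟨hp⟩
    haveI : ExpChar F (ringChar F) := ExpChar.prime hp
    haveI : PerfectRing F (ringChar F) := by
      refine PerfectRing.ofSurjective F (ringChar F) fun a => ?_
      by_contra hno
      have ha : ∀ b : F, b ^ ringChar F ≠ a := by
        intro b hb
        exact hno ⟨b, by rw [frobenius_def, hb]⟩
      set n := finrank F M with hn
      obtain ⟨x, hx⟩ := IsAlgClosed.exists_pow_nat_eq (algebraMap F M a)
        (n := ringChar F ^ n) (pow_pos hp.pos n)
      have hdvd := aux_pow_dvd_finrank hp ha hx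
      have hle : finrank F F⟮x⟯ ∣ finrank F M :=
        ⟨finrank F⟮x⟯ M, (finrank_mul_finrank F F⟮x⟯ M).symm⟩
      have := Nat.le_of_dvd finrank_pos (hdvd.trans hle)
      have hlt : n < ringChar F ^ n := Nat.lt_pow_self hp.one_lt
      omega
    exact PerfectRing.toPerfectField F (ringChar F)
  · haveI : CharP F 0 := hp ▸ ringChar.charP F
    haveI : CharZero F := CharP.charP_to_charZero F
    exact PerfectField.ofCharZero

lemma aux_AS_degree {M : Type*} [Field M] {p : ℕ} (hp : 1 < p) (c : M) :
    (X ^ p - X - C c : M[X]).degree = p := by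
  have h : (X ^ p - X - C c : M[X]) = X ^ p - (X + C c) := by ring
  rw [h, degree_sub_eq_left_of_degree_lt, degree_X_pow]
  rw [degree_X_pow]
  calc degree (X + C c) ≤ 1 := degree_add_le_of_degree_le (le_of_eq degree_X) (degree_C_le.trans (by norm_num))
  _ < (p : WithBot ℕ) := by exact_mod_cast hp

lemma aux_fermat {M : Type*} [Field M] {p : ℕ} [hp : Fact p.Prime] [CharP M p]
    {y : M} (hy : y ^ p = y) : ∃ z : ZMod p, (ZMod.castHom dvd_rfl M) z = y := by
  set χ : ZMod p →+* M := ZMod.castHom dvd_rfl M with hχ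
  have χinj : Function.Injective χ := χ.injective
  set q : M[X] := X ^ p - X with hq
  have hqdeg : q.degree = p := by
    have := aux_AS_degree hp.out.one_lt (0 : M)
    simpa using this
  have hq0 : q ≠ 0 := fun h => by
    rw [h, degree_zero] at hqdeg
    exact absurd hqdeg (by exact_mod_cast (WithBot.bot_ne_coe))
  have hqnat : q.natDegree = p := natDegree_eq_of_degree_eq_some hqdeg
  have hroots : ∀ z : ZMod p, eval (χ z) q = 0 := by
    intro z
    simp only [hq, eval_sub, eval_pow, eval_X, ← map_pow, ZMod.pow_card, sub_self]
  by_contra hno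
  push_neg at hno
  classical
  set S : Finset M := Finset.univ.image χ with hS
  have hScard : S.card = p := by
    rw [hS, Finset.card_image_of_injective _ χinj, Finset.card_univ, ZMod.card]
  have hynotS : y ∉ S := by
    intro hmem
    obtain ⟨z, _, hz⟩ := Finset.mem_image.mp hmem
    exact hno z hz
  have hSsub : insert y S ⊆ q.roots.toFinset := by
    intro s hs
    rw [Multiset.mem_toFinset, mem_roots hq0]
    rcases Finset.mem_insert.mp hs with rfl | hsS
    · simp [IsRoot, hq, hy]
    · obtain ⟨z, _, rfl⟩ := Finset.mem_image.mp hsS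
      exact hroots z
  have h1 : (insert y S).card ≤ q.roots.toFinset.card := Finset.card_le_card hSsub
  rw [Finset.card_insert_of_notMem hynotS, hScard] at h1
  have h2 : q.roots.toFinset.card ≤ p :=
    le_trans (Multiset.toFinset_card_le _) (le_trans (card_roots' q) (le_of_eq hqnat))
  omega

lemma aux_char_case {F : Type*} {M : Type*} [Field F] [Field M] [Algebra F M]
    [FiniteDimensional F M] [IsAlgClosed M] [IsGalois F M] {p : ℕ} [hp : Fact p.Prime]
    [CharP F p] (hrank : finrank F M = p) : False := by
  classical
  haveI : CharP M p := charP_of_injective_algebraMap (algebraMap F M).injective p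
  haveI : ExpChar M p := ExpChar.prime hp.out
  haveI : ExpChar F p := ExpChar.prime hp.out
  have hp1 : 1 < p := hp.out.one_lt
  have hone : (1 : M) ≠ 0 := one_ne_zero
  have hcard : Fintype.card (M ≃ₐ[F] M) = p := by
    rw [← Nat.card_eq_fintype_card, IsGalois.card_aut_eq_finrank, hrank]
  haveI : IsCyclic (M ≃ₐ[F] M) := isCyclic_of_prime_card (Nat.card_eq_fintype_card.trans hcard)
  obtain ⟨τ, hτ⟩ := IsCyclic.exists_generator (α := M ≃ₐ[F] M)
  have hord : orderOf τ = p := (orderOf_eq_card_of_forall_mem_zpowers hτ).trans (Nat.card_eq_fintype_card.trans hcard)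
  have hτp : τ ^ p = 1 := by rw [← hord]; exact pow_orderOf_eq_one τ
  -- elements fixed by τ are in F
  have hfix : ∀ x : M, τ x = x → ∃ y : F, algebraMap F M y = x := by
    intro x hx
    have hpow : ∀ n : ℕ, (τ ^ n) x = x := by
      intro n
      induction n with
      | zero => simp
      | succ n ih => rw [pow_succ, AlgEquiv.mul_apply, hx, ih]
    have : x ∈ (⊥ : IntermediateField F M) := by
      rw [← OrderIso.map_bot (IsGalois.intermediateFieldEquivSubgroup (F := F) (E := M)).symm]
      rintro ⟨g, -⟩
      obtain ⟨n, rfl⟩ := (mem_powers_iff_mem_zpowers).mpr (hτ g)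
      exact hpow n
    exact (IntermediateField.mem_bot).mp this
  -- a sum-shift identity
  have shift : ∀ f : ℕ → M, ∑ k ∈ Finset.range p, f (k + 1)
      = (∑ k ∈ Finset.range p, f k) + f p - f 0 := by
    intro f
    have h1 := Finset.sum_range_succ' f p
    have h2 := Finset.sum_range_succ f p
    rw [h2] at h1
    linear_combination -h1
  -- an element of trace 1
  obtain ⟨c₀, hc₀⟩ := Algebra.trace_surjective F M 1
  have hsumG : ∑ g : M ≃ₐ[F] M, g c₀ = 1 := by
    rw [← trace_eq_sum_automorphisms, hc₀, map_one]
  have hbij : Function.Bijective (fun k : Fin p => τ ^ (k : ℕ)) := by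
    rw [Fintype.bijective_iff_injective_and_card]
    refine ⟨fun k l hkl => ?_, by simp [hcard]⟩
    have := pow_injOn_Iio_orderOf (x := τ) (by simpa [hord] using k.2)
      (by simpa [hord] using l.2) hkl
    exact Fin.ext this
  have hsum : ∑ k ∈ Finset.range p, (τ ^ k) c₀ = 1 := by
    rw [← Fin.sum_univ_eq_sum_range (fun k => (τ ^ k) c₀) p, ← hsumG]
    exact Fintype.sum_bijective _ hbij _ _ (fun k => rfl)
  -- construct α with τ α = α + 1
  set A : M := ∑ k ∈ Finset.range p, (k : M) * (τ ^ k) c₀ with hA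
  have hτA : τ A = A - 1 := by
    set h : ℕ → M := fun j => ((j : M) - 1) * (τ ^ j) c₀ with hh
    have expand : τ A = ∑ k ∈ Finset.range p, h (k + 1) := by
      rw [hA, map_sum]
      refine Finset.sum_congr rfl fun k _ => ?_
      rw [map_mul, map_natCast, hh]
      simp only []
      rw [pow_succ', AlgEquiv.mul_apply]
      push_cast
      ring
    rw [expand, shift h]
    have hhp : h p = (0 - 1) * c₀ := by
      rw [hh]
      simp only []
      rw [CharP.cast_eq_zero M p, hτp]
      rfl
    have hh0 : h 0 = (0 - 1) * c₀ := by
      rw [hh]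
      simp
    rw [hhp, hh0]
    have hsplit : ∑ k ∈ Finset.range p, h k
        = (∑ k ∈ Finset.range p, (k : M) * (τ ^ k) c₀) - ∑ k ∈ Finset.range p, (τ ^ k) c₀ := by
      rw [← Finset.sum_sub_distrib]
      refine Finset.sum_congr rfl fun k _ => ?_
      rw [hh]
      ring
    rw [hsplit, hsum, ← hA]
    ring
  set α : M := -A with hαdef
  have hτα : τ α = α + 1 := by rw [hαdef, map_neg, hτA]; ring
  set a₀ : M := α ^ p - α with ha₀def
  have hτa₀ : τ a₀ = a₀ := by
    rw [ha₀def, map_sub, map_pow, hτα, add_pow_char]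
    ring
  obtain ⟨a, ha⟩ := hfix a₀ hτa₀
  have hαnot : ∀ y : F, algebraMap F M y ≠ α := by
    intro y hy
    have h1 : τ α = α := by rw [← hy, AlgEquiv.commutes]
    rw [hτα] at h1
    exact hone (by linear_combination h1)
  have int : IsIntegral F α := IsIntegral.of_finite F α
  set E := F⟮α⟯ with hE
  have hdE : finrank F E * finrank E M = p := by rw [finrank_mul_finrank, hrank]
  have hdE1 : finrank F E ≠ 1 := by
    intro h1
    rw [IntermediateField.finrank_eq_one_iff] at h1
    have : α ∈ (⊥ : IntermediateField F M) := h1 ▸ IntermediateField.mem_adjoin_simple_self F α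
    obtain ⟨y, hy⟩ := (IntermediateField.mem_bot).mp this
    exact hαnot y hy
  have hdEp : finrank F E = p :=
    (hp.out.eq_one_or_self_of_dvd _ ⟨_, hdE.symm⟩).resolve_left hdE1
  have htop : E = ⊤ := by
    have h2 : finrank E M = 1 := by
      have h3 := hdE
      rw [hdEp] at h3
      exact Nat.eq_of_mul_eq_mul_left hp.out.pos (by rw [mul_one]; exact h3)
    have hbt : (⊥ : Subalgebra E M) = ⊤ := Subalgebra.bot_eq_top_iff_finrank_eq_one.mpr h2
    rw [eq_top_iff]
    intro x _
    have hx : x ∈ (⊥ : Subalgebra E M) := hbt ▸ trivial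
    obtain ⟨y, hy⟩ := Algebra.mem_bot.mp hx
    exact hy ▸ y.2
  have hmdeg : (minpoly F α).natDegree = p := by
    rw [← IntermediateField.adjoin.finrank int]
    exact hdEp
  have hαp : α ^ p = α + a₀ := by rw [ha₀def]; ring
  obtain ⟨β, hβ⟩ := IsAlgClosed.exists_root (X ^ p - X - C (a₀ * α ^ (p - 1)) : M[X])
    (by rw [aux_AS_degree hp1]; exact_mod_cast hp.out.ne_zero)
  have hβeq : β ^ p - β = a₀ * α ^ (p - 1) := by
    have := hβ
    simp only [IsRoot, eval_sub, eval_pow, eval_X, eval_C] at this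
    linear_combination this
  have hβE : β ∈ F⟮α⟯ := by rw [← hE, htop]; trivial
  have hβadj : β ∈ (Polynomial.aeval (R := F) α).range := by
    rw [← Algebra.adjoin_singleton_eq_range_aeval]
    rw [← IntermediateField.adjoin_simple_toSubalgebra_of_isAlgebraic int.isAlgebraic]
    exact hβE
  obtain ⟨f, hf⟩ := (AlgHom.mem_range _).mp hβadj
  set m := minpoly F α with hm
  have hm_monic : m.Monic := minpoly.monic int
  set r := f %ₘ m with hr
  have hrβ : aeval α r = β := by
    have hdiv := modByMonic_add_div f m
    have h4 : aeval α (f %ₘ m + m * (f /ₘ m)) = aeval α f := by rw [hdiv]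
    rw [map_add, map_mul, minpoly.aeval, zero_mul, add_zero] at h4
    rw [hr, h4, hf]
  have hrdeg : r.natDegree ≤ p - 1 := by
    rcases eq_or_ne r 0 with h0 | h0
    · simp [h0]
    · have hlt := degree_modByMonic_lt f hm_monic
      rw [← hr] at hlt
      have := natDegree_lt_natDegree h0 hlt
      omega
  set φ := frobenius F p with hφ
  have hcommute : (frobenius M p).comp (algebraMap F M) = (algebraMap F M).comp φ := by
    ext y
    simp only [RingHom.coe_comp, Function.comp_apply, hφ, frobenius_def, map_pow]
  have hβp : β ^ p = eval₂ ((algebraMap F M).comp φ) (α + a₀) r := by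
    calc β ^ p = frobenius M p (eval₂ (algebraMap F M) α r) := by
          rw [← aeval_def, hrβ, frobenius_def]
      _ = eval₂ ((frobenius M p).comp (algebraMap F M)) (frobenius M p α) r := by
          rw [hom_eval₂]
      _ = eval₂ ((algebraMap F M).comp φ) (α + a₀) r := by
          rw [hcommute, frobenius_def, hαp]
  have hXCa : aeval α (X + C a : F[X]) = α + a₀ := by
    rw [map_add, aeval_X, aeval_C, ha]
  have hcompeval : aeval α ((r.map φ).comp (X + C a))
      = eval₂ ((algebraMap F M).comp φ) (α + a₀) r := by
    rw [aeval_comp, hXCa, aeval_def, eval₂_map]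
  set g := (r.map φ).comp (X + C a) - r - C a * X ^ (p - 1) with hg
  have hgα : aeval α g = 0 := by
    rw [hg, map_sub, map_sub, hcompeval, ← hβp, hrβ, map_mul, aeval_C, map_pow, aeval_X, ha]
    linear_combination hβeq
  have hdvdg : m ∣ g := minpoly.dvd F α hgα
  have hgdeg : g.degree < m.degree := by
    have hb1 : ((r.map φ).comp (X + C a)).natDegree ≤ p - 1 := by
      refine le_trans natDegree_comp_le ?_
      rw [natDegree_X_add_C, mul_one]
      exact le_trans (natDegree_map_le) hrdeg
    have hb3 : (C a * X ^ (p - 1)).natDegree ≤ p - 1 := by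
      refine le_trans (natDegree_C_mul_le a _) ?_
      simp
    have hgnat : g.natDegree ≤ p - 1 :=
      le_trans (natDegree_sub_le _ _)
        (max_le (le_trans (natDegree_sub_le _ _) (max_le hb1 hrdeg)) hb3)
    have hm0 : m ≠ 0 := minpoly.ne_zero int
    rw [degree_eq_natDegree hm0, hmdeg]
    calc g.degree ≤ (g.natDegree : WithBot ℕ) := degree_le_natDegree
      _ ≤ ((p - 1 : ℕ) : WithBot ℕ) := by exact_mod_cast hgnat
      _ < (p : WithBot ℕ) := by exact_mod_cast (by omega : p - 1 < p)
  have hg0 : g = 0 := eq_zero_of_dvd_of_degree_lt hdvdg hgdeg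
  set c' := r.coeff (p - 1) with hc'
  have hcoeff_comp : ((r.map φ).comp (X + C a)).coeff (p - 1) = φ c' := by
    rw [← taylor_apply, taylor_coeff]
    have hCd : hasseDeriv (p - 1) (r.map φ) = C ((r.map φ).coeff (p - 1)) := by
      ext n
      rw [hasseDeriv_coeff, coeff_C]
      cases n with
      | zero => simp
      | succ n =>
        have hlt : (r.map φ).natDegree < n + 1 + (p - 1) := by
          have := natDegree_map_le (f := φ) (p := r)
          omega
        rw [coeff_eq_zero_of_natDegree_lt hlt, mul_zero, if_neg (by omega)]
    rw [hCd, eval_C, coeff_map]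
  have hkey : c' ^ p - c' = a := by
    have h0 := congrArg (fun q : F[X] => q.coeff (p - 1)) hg0
    simp only [hg, coeff_sub, coeff_zero] at h0
    rw [hcoeff_comp] at h0
    have hXc : (C a * X ^ (p - 1)).coeff (p - 1) = a := by
      rw [coeff_C_mul, coeff_X_pow, if_pos rfl, mul_one]
    rw [hXc] at h0
    have hfr : φ c' = c' ^ p := frobenius_def ..
    rw [hfr] at h0
    linear_combination h0
  set y := α - algebraMap F M c' with hy
  have hyp : y ^ p = y := by
    rw [hy, sub_pow_char]
    have h5 : (algebraMap F M c') ^ p = algebraMap F M c' + a₀ := by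
      rw [← map_pow, show c' ^ p = c' + a by linear_combination hkey, map_add, ha]
    rw [hαp, h5]
    ring
  have hτy : τ y = y + 1 := by
    rw [hy, map_sub, hτα, AlgEquiv.commutes]
    ring
  obtain ⟨z, hz⟩ := aux_fermat (p := p) hyp
  have hτyy : τ y = y := by
    rw [← hz]
    have h6 : (τ.toRingEquiv.toRingHom).comp (ZMod.castHom (dvd_refl p) M)
        = ZMod.castHom (dvd_refl p) M := RingHom.ext_zmod _ _
    exact DFunLike.congr_fun h6 z
  rw [hτy] at hτyy
  exact hone (by linear_combination hτyy)

lemma aux_kummer_case {F : Type u} {M : Type*} [Field F] [Field M] [Algebra F M]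
    [FiniteDimensional F M] [IsAlgClosed M] [IsGalois F M] {q : ℕ} [hq : Fact q.Prime]
    (hrank : finrank F M = q) (hchar : ((q : ℕ) : M) ≠ 0)
    (j : F) (hj : j ^ 2 = -1) : False := by
  classical
  haveI : NeZero ((q : ℕ) : M) := ⟨hchar⟩
  have hq2 : 2 ≤ q := hq.out.two_le
  obtain ⟨ζ, hζ⟩ := HasEnoughRootsOfUnity.exists_primitiveRoot M q
  have intζ : IsIntegral F ζ := IsIntegral.of_finite F ζ
  have hδdvd : finrank F F⟮ζ⟯ ∣ q :=
    ⟨finrank F⟮ζ⟯ M, by rw [finrank_mul_finrank, hrank]⟩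
  have hmdeg : (minpoly F ζ).natDegree = finrank F F⟮ζ⟯ :=
    (IntermediateField.adjoin.finrank intζ).symm
  have hdvdpoly : minpoly F ζ ∣ X ^ q - C 1 := by
    apply minpoly.dvd
    simp [hζ.pow_eq_one]
  have hδ1 : finrank F F⟮ζ⟯ = 1 := by
    rcases hq.out.eq_one_or_self_of_dvd _ hδdvd with h | h
    · exact h
    · exfalso
      have hmq : (minpoly F ζ).natDegree = q := by rw [hmdeg, h]
      have hmonic : (X ^ q - C (1 : F)).Monic := monic_X_pow_sub_C 1 (by omega)
      have hXq0 : (X ^ q - C (1 : F)) ≠ 0 := hmonic.ne_zero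
      have hassoc : Associated (minpoly F ζ) (X ^ q - C 1) :=
        associated_of_dvd_of_natDegree_le hdvdpoly hXq0
          (le_of_eq (by rw [natDegree_X_pow_sub_C, hmq]))
      have heq : minpoly F ζ = X ^ q - C 1 :=
        eq_of_monic_of_associated (minpoly.monic intζ) hmonic hassoc
      have hroot : X - C (1 : F) ∣ minpoly F ζ := by
        rw [heq, dvd_iff_isRoot]
        simp [IsRoot]
      obtain ⟨t, ht⟩ := hroot
      rcases (minpoly.irreducible intζ).isUnit_or_isUnit ht with hu | hu
      · exact not_isUnit_X_sub_C 1 hu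
      · have ht0 : t ≠ 0 := by
          intro h0
          rw [h0, mul_zero] at ht
          exact (minpoly.ne_zero intζ) ht
        have hdeg := congrArg natDegree ht
        rw [natDegree_mul (X_sub_C_ne_zero 1) ht0, natDegree_X_sub_C,
          natDegree_eq_zero_of_isUnit hu, hmq] at hdeg
        omega
  obtain ⟨z, hz⟩ := IntermediateField.mem_bot.mp
    (IntermediateField.finrank_eq_one_iff.mp hδ1 ▸ IntermediateField.mem_adjoin_simple_self F ζ)
  have hzprim : IsPrimitiveRoot z q := by
    constructor
    · apply (algebraMap F M).injective
      rw [map_pow, hz, map_one, hζ.pow_eq_one]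
    · intro l hl
      exact hζ.dvd_of_pow_eq_one l (by rw [← hz, ← map_pow, hl, map_one])
  have hK : (primitiveRoots (finrank F M) F).Nonempty := by
    rw [hrank]
    exact ⟨z, (mem_primitiveRoots (by omega)).mpr hzprim⟩
  haveI : IsCyclic (M ≃ₐ[F] M) := isCyclic_of_prime_card
    (by rw [IsGalois.card_aut_eq_finrank, hrank])
  obtain ⟨α, ⟨a, ha⟩, hadj⟩ := exists_root_adjoin_eq_top_of_isCyclic F M hK
  have hirr : Irreducible (X ^ finrank F M - C a) :=
    irreducible_X_pow_sub_C_of_root_adjoin_eq_top ha.symm hadj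
  rw [hrank] at hirr
  have hA : ∀ b : F, b ^ q ≠ a := fun b =>
    pow_ne_of_irreducible_X_pow_sub_C hirr dvd_rfl hq.out.ne_one b
  -- an irreducible polynomial of degree q^2 (or 4)
  have hbig : ∃ s : ℕ, q < s ∧ Irreducible (X ^ s - C a) := by
    by_cases hq2' : q = 2
    · subst hq2'
      have hirr2 : Irreducible (X ^ 2 - C a) := hirr
      refine ⟨2 * 2, by omega, X_pow_mul_sub_C_irreducible hirr2 ?_⟩
      intro E _ _ x hx
      have hint : IsIntegral F x := by
        by_contra hni
        rw [minpoly.eq_zero hni] at hx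
        exact (monic_X_pow_sub_C a (two_ne_zero)).ne_zero hx.symm
      apply X_pow_sub_C_irreducible_of_prime Nat.prime_two
      intro b hb
      haveI := IntermediateField.adjoin.finiteDimensional hint
      have hnorm : (Algebra.norm F b) ^ 2 = -a := by
        rw [← map_pow, hb, ← IntermediateField.adjoin.powerBasis_gen hint,
          Algebra.PowerBasis.norm_gen_eq_coeff_zero_minpoly]
        simp [IntermediateField.adjoin.powerBasis_gen, IntermediateField.minpoly_gen, hx,
          natDegree_X_pow_sub_C, coeff_X_pow]
      refine hA (j * Algebra.norm F b) ?_
      rw [mul_pow, hj, hnorm]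
      ring
    · exact ⟨q ^ 2, by nlinarith,
        X_pow_sub_C_irreducible_of_prime_pow hq.out hq2' 2 hA⟩
  obtain ⟨s, hs, hsirr⟩ := hbig
  have hs0 : s ≠ 0 := by omega
  obtain ⟨x, hx⟩ := IsAlgClosed.exists_aeval_eq_zero M (X ^ s - C a)
    (by rw [degree_X_pow_sub_C (by omega : 0 < s) a]; exact_mod_cast hs0)
  have hminx : minpoly F x = X ^ s - C a :=
    (minpoly.eq_of_irreducible_of_monic hsirr hx (monic_X_pow_sub_C a hs0)).symm
  have hle : (minpoly F x).natDegree ≤ finrank F M := minpoly.natDegree_le x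
  rw [hminx, natDegree_X_pow_sub_C, hrank] at hle
  omega

lemma aux_main {F : Type u} {M : Type*} [Field F] [Field M] [Algebra F M]
    [FiniteDimensional F M] [IsAlgClosed M] (j : F) (hj : j ^ 2 = -1) :
    finrank F M = 1 := by
  classical
  haveI : Algebra.IsAlgebraic F M := Algebra.IsAlgebraic.of_finite F M
  haveI : PerfectField F := aux_perfectField F M
  haveI : IsAlgClosure F M := ⟨inferInstance, inferInstance⟩
  haveI : Normal F M := IsAlgClosure.normal F M
  haveI : IsGalois F M := ⟨⟩
  by_contra hne
  obtain ⟨q, hqprime, hqdvd⟩ := Nat.exists_prime_and_dvd hne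
  haveI : Fact q.Prime := ⟨hqprime⟩
  rw [← IsGalois.card_aut_eq_finrank] at hqdvd
  obtain ⟨σ, hσ⟩ := exists_prime_orderOf_dvd_card' q hqdvd
  set F' := IntermediateField.fixedField (Subgroup.zpowers σ) with hF'
  have hrank : finrank F' M = q := by
    rw [hF', IntermediateField.finrank_fixedField_eq_card, Nat.card_zpowers, hσ]
  haveI : IsGalois F' M := IsGalois.tower_top_intermediateField F'
  set j' : F' := ⟨algebraMap F M j, F'.algebraMap_mem j⟩ with hj'
  have hj'2 : j' ^ 2 = -1 := by
    apply Subtype.ext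
    show ((j' ^ 2 : F') : M) = ((-1 : F') : M)
    push_cast
    show (algebraMap F M j) ^ 2 = -1
    rw [← map_pow, hj, map_neg, map_one]
  by_cases hcq : ((q : ℕ) : M) = 0
  · haveI : CharP M (ringChar M) := ringChar.charP M
    have hdvd : ringChar M ∣ q := ringChar.dvd hcq
    have hMq : ringChar M = q :=
      ((Nat.dvd_prime hqprime).mp hdvd).resolve_left CharP.ringChar_ne_one
    haveI : CharP M q := hMq ▸ ringChar.charP M
    haveI : CharP F' q := (Algebra.charP_iff F' M q).mpr ‹CharP M q›
    exact aux_char_case (F := F') (M := M) hrank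
  · exact aux_kummer_case hrank hcq j' hj'2

lemma aux_isAlgClosed_of_ringEquiv {A : Type*} {B : Type*} [Field A] [Field B]
    (e : A ≃+* B) [IsAlgClosed B] : IsAlgClosed A := by
  apply IsAlgClosed.of_exists_root
  intro f hmon hirr
  obtain ⟨x, hx⟩ := IsAlgClosed.exists_root (f.map (e : A →+* B)) (by
    rw [degree_map]
    exact (Polynomial.degree_pos_of_irreducible hirr).ne')
  refine ⟨e.symm x, ?_⟩
  apply e.injective
  rw [map_zero]
  have h3 := Polynomial.eval₂_at_apply (p := f) (e : A →+* B) (e.symm x)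
  have h4 : ((e : A →+* B) (e.symm x)) = x := e.apply_symm_apply x
  rw [h4, ← eval_map] at h3
  exact h3 ▸ hx

theorem stmt_1 (K : Type*) [Field K] (L : Type*) [Field L] [Algebra K L]
    (i : L) (hi : i ^ 2 = -1) (hgen : Algebra.adjoin K ({i} : Set L) = ⊤)
    (hL : ¬ IsAlgClosed L)
    (M : Type*) [Field M] [Algebra K M] [FiniteDimensional K M] :
    ¬ IsAlgClosed M := by
  intro hM
  apply hL
  have hint : IsIntegral K i := by
    refine ⟨X ^ 2 - C (-1), monic_X_pow_sub_C (-1) two_ne_zero, ?_⟩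
    simp [hi]
  haveI : Module.Finite K L := by
    have hfg := fg_adjoin_of_finite (Set.finite_singleton i)
      (fun x hx => by rwa [Set.mem_singleton_iff.mp hx])
    rw [hgen] at hfg
    rw [Module.finite_def, ← Algebra.top_toSubmodule]
    exact hfg
  haveI : Algebra.IsAlgebraic K L := Algebra.IsAlgebraic.of_finite K L
  let φ : L →ₐ[K] M := IsAlgClosed.lift
  let F' : IntermediateField K M := φ.fieldRange
  let e : L ≃ₐ[K] F' := AlgEquiv.ofInjectiveField φ
  haveI : FiniteDimensional F' M := FiniteDimensional.right K F' M
  set j : F' := e i with hjdef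
  have hj : j ^ 2 = -1 := by rw [hjdef, ← map_pow, hi, map_neg, map_one]
  have hone : finrank F' M = 1 := aux_main j hj
  have hbt : (⊥ : Subalgebra F' M) = ⊤ := Subalgebra.bot_eq_top_iff_finrank_eq_one.mpr hone
  have hsurj : Function.Surjective (algebraMap F' M) := by
    intro x
    have : x ∈ (⊥ : Subalgebra F' M) := hbt ▸ trivial
    obtain ⟨y, hy⟩ := Algebra.mem_bot.mp this
    exact ⟨y, hy⟩
  let ψ : F' ≃+* M := RingEquiv.ofBijective (algebraMap F' M) ⟨(algebraMap F' M).injective, hsurj⟩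
  exact aux_isAlgClosed_of_ringEquiv (e.toRingEquiv.trans ψ)
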